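/- Let p be a prime and let e be the entry point of the Fibonacci sequence modulo p. Then R_n^(4e) ≡ I_n (mod p). -/

import Mathlib

open Polynomial Finset Matrix

/-- `R n` over `ZMod p`: the `n × n` matrix whose 1-based `(i,j)` entry is `C(i-1, n-j)`. -/
def RmatMod (p n : ℕ) : Matrix (Fin n) (Fin n) (ZMod p) :=
  Matrix.of fun i j => (Nat.choose i.1 (n - 1 - j.1) : ZMod p)

section Aux

variable {K : Type*} [CommRing K]

/-- Homogenization-substitution: `h(X) ↦ ∑ hᵢ uⁱ v^(m-i)`. -/
noncomputable def homog (m : ℕ) (h u v : K[X]) : K[X] :=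
  ∑ i ∈ Finset.range (m + 1), Polynomial.C (h.coeff i) * (u ^ i * v ^ (m - i))

lemma homog_mul (m1 m2 : ℕ) (h1 h2 u v : K[X]) (hd1 : h1.natDegree ≤ m1)
    (hd2 : h2.natDegree ≤ m2) :
    homog (m1 + m2) (h1 * h2) u v = homog m1 h1 u v * homog m2 h2 u v := by
  classical
  set M := m1 + m2 with hM
  set F : ℕ → ℕ → K[X] := fun k l =>
    Polynomial.C (h1.coeff k * h2.coeff l) * (u ^ (k + l) * v ^ (M - (k + l))) with hF
  have hz1 : ∀ k, m1 < k → h1.coeff k = 0 := fun k hk =>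
    Polynomial.coeff_eq_zero_of_natDegree_lt (lt_of_le_of_lt hd1 hk)
  have hz2 : ∀ k, m2 < k → h2.coeff k = 0 := fun k hk =>
    Polynomial.coeff_eq_zero_of_natDegree_lt (lt_of_le_of_lt hd2 hk)
  have hL : homog M (h1 * h2) u v = ∑ i ∈ range (M + 1), ∑ k ∈ range (i + 1), F k (i - k) := by
    unfold homog
    refine Finset.sum_congr rfl fun i hi => ?_
    rw [Polynomial.coeff_mul, Finset.Nat.sum_antidiagonal_eq_sum_range_succ_mk, map_sum,
      Finset.sum_mul]
    refine Finset.sum_congr rfl fun k hk => ?_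
    have hk' : k + (i - k) = i := by
      have := Finset.mem_range.mp hk; omega
    simp only [hF, hk']
  have hR : homog m1 h1 u v * homog m2 h2 u v
      = ∑ k ∈ range (m1 + 1), ∑ l ∈ range (m2 + 1), F k l := by
    unfold homog
    rw [Finset.sum_mul_sum]
    refine Finset.sum_congr rfl fun k hk => Finset.sum_congr rfl fun l hl => ?_
    have hk' := Finset.mem_range.mp hk
    have hl' := Finset.mem_range.mp hl
    have e1 : (m1 - k) + (m2 - l) = M - (k + l) := by omega
    simp only [hF, Polynomial.C_mul, ← e1, pow_add]
    ring
  rw [hL, hR, Finset.sum_range_diag_flip]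
  have step1 : ∑ k ∈ range (M + 1), ∑ l ∈ range (M + 1 - k), F k l
      = ∑ k ∈ range (m1 + 1), ∑ l ∈ range (M + 1 - k), F k l := by
    refine (Finset.sum_subset (Finset.range_subset_range.mpr (by omega)) fun k _ hk => ?_).symm
    have hk' : m1 < k := by simp [Finset.mem_range] at hk; omega
    refine Finset.sum_eq_zero fun l _ => ?_
    simp [hF, hz1 k hk']
  rw [step1]
  refine Finset.sum_congr rfl fun k hk => ?_
  have hk' := Finset.mem_range.mp hk
  refine (Finset.sum_subset (Finset.range_subset_range.mpr (by omega)) fun l _ hl => ?_).symm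
  have hl' : m2 < l := by simp [Finset.mem_range] at hl; omega
  simp [hF, hz2 l hl']

lemma homog_pow (j : ℕ) (pol u v : K[X]) (hd : pol.natDegree ≤ 1) :
    homog j (pol ^ j) u v = (homog 1 pol u v) ^ j := by
  induction j with
  | zero => simp [homog]
  | succ j ih =>
    have h1 : (pol ^ j).natDegree ≤ j :=
      le_trans Polynomial.natDegree_pow_le (by simpa using Nat.mul_le_mul_left j hd)
    have h2 := homog_mul 1 j pol (pol ^ j) u v hd h1
    rw [show (1 : ℕ) + j = j + 1 from by omega] at h2
    rw [pow_succ', h2, ih, ← pow_succ']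

lemma homog_linear (a b : K) (u v : K[X]) :
    homog 1 (Polynomial.C a * X + Polynomial.C b) u v = Polynomial.C a * u + Polynomial.C b * v := by
  unfold homog
  rw [Finset.sum_range_succ, Finset.sum_range_one]
  simp [coeff_add, coeff_C_mul, coeff_X, coeff_C]
  ring

lemma natDegree_linear_le (a b : K) : (Polynomial.C a * X + Polynomial.C b).natDegree ≤ 1 := by
  refine le_trans (Polynomial.natDegree_add_le _ _) (max_le ?_ ?_)
  · exact le_trans (Polynomial.natDegree_C_mul_le _ _) Polynomial.natDegree_X_le
  · simp

end Aux

section Phi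

variable {K : Type*} [CommRing K]

/-- Matrix of the symmetric-power action of a 2×2 matrix on polys of degree < n. -/
noncomputable def phi (n : ℕ) (A : Matrix (Fin 2) (Fin 2) K) : Matrix (Fin n) (Fin n) K :=
  Matrix.of fun i j =>
    ((Polynomial.C (A 0 0) * X + Polynomial.C (A 0 1)) ^ j.1 *
      (Polynomial.C (A 1 0) * X + Polynomial.C (A 1 1)) ^ (n - 1 - j.1)).coeff i.1

lemma phi_mul (n : ℕ) (A B : Matrix (Fin 2) (Fin 2) K) :
    phi n (A * B) = phi n B * phi n A := by
  ext i j
  have hn : 0 < n := i.pos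
  have hj : j.1 ≤ n - 1 := by have := j.2; omega
  set m := n - 1 with hm
  set pA := Polynomial.C (A 0 0) * X + Polynomial.C (A 0 1) with hpA
  set qA := Polynomial.C (A 1 0) * X + Polynomial.C (A 1 1) with hqA
  set uB := Polynomial.C (B 0 0) * X + Polynomial.C (B 0 1) with huB
  set vB := Polynomial.C (B 1 0) * X + Polynomial.C (B 1 1) with hvB
  have dp : (pA ^ j.1).natDegree ≤ j.1 := by
    refine Polynomial.natDegree_pow_le.trans ?_
    have h := natDegree_linear_le (A 0 0) (A 0 1)
    rw [← hpA] at h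
    exact (Nat.mul_le_mul_left _ h).trans (by omega)
  have dq : (qA ^ (m - j.1)).natDegree ≤ m - j.1 := by
    refine Polynomial.natDegree_pow_le.trans ?_
    have h := natDegree_linear_le (A 1 0) (A 1 1)
    rw [← hqA] at h
    exact (Nat.mul_le_mul_left _ h).trans (by omega)
  have key : homog m (pA ^ j.1 * qA ^ (m - j.1)) uB vB
      = (Polynomial.C ((A * B) 0 0) * X + Polynomial.C ((A * B) 0 1)) ^ j.1 *
        (Polynomial.C ((A * B) 1 0) * X + Polynomial.C ((A * B) 1 1)) ^ (m - j.1) := by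
    have h2 := homog_mul j.1 (m - j.1) (pA ^ j.1) (qA ^ (m - j.1)) uB vB dp dq
    rw [show j.1 + (m - j.1) = m from by omega] at h2
    rw [h2, homog_pow _ _ _ _ (natDegree_linear_le _ _),
      homog_pow _ _ _ _ (natDegree_linear_le _ _), homog_linear, homog_linear]
    have e00 : Polynomial.C (A 0 0) * uB + Polynomial.C (A 0 1) * vB
        = Polynomial.C ((A * B) 0 0) * X + Polynomial.C ((A * B) 0 1) := by
      simp only [huB, hvB, Matrix.mul_apply, Fin.sum_univ_two, Polynomial.C_add,
        Polynomial.C_mul]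
      ring
    have e10 : Polynomial.C (A 1 0) * uB + Polynomial.C (A 1 1) * vB
        = Polynomial.C ((A * B) 1 0) * X + Polynomial.C ((A * B) 1 1) := by
      simp only [huB, hvB, Matrix.mul_apply, Fin.sum_univ_two, Polynomial.C_add,
        Polynomial.C_mul]
      ring
    rw [e00, e10]
  have lhs : phi n (A * B) i j = (homog m (pA ^ j.1 * qA ^ (m - j.1)) uB vB).coeff i.1 := by
    rw [key]; rfl
  rw [lhs]
  unfold homog
  rw [Polynomial.finset_sum_coeff]
  have hmn : m + 1 = n := by omega
  rw [hmn, Matrix.mul_apply, ← Fin.sum_univ_eq_sum_range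
    (fun k => (Polynomial.C ((pA ^ j.1 * qA ^ (m - j.1)).coeff k) *
      (uB ^ k * vB ^ (m - k))).coeff i.1) n]
  refine Finset.sum_congr rfl fun k _ => ?_
  rw [Polynomial.coeff_C_mul]
  show (pA ^ j.1 * qA ^ (m - j.1)).coeff k.1 * (uB ^ k.1 * vB ^ (m - k.1)).coeff i.1
      = phi n B i k * phi n A k j
  rw [mul_comm]
  rfl

lemma phi_one (n : ℕ) : phi (K := K) n 1 = 1 := by
  ext i j
  have h00 : (1 : Matrix (Fin 2) (Fin 2) K) 0 0 = 1 := Matrix.one_apply_eq 0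
  have h01 : (1 : Matrix (Fin 2) (Fin 2) K) 0 1 = 0 := Matrix.one_apply_ne (by decide)
  have h10 : (1 : Matrix (Fin 2) (Fin 2) K) 1 0 = 0 := Matrix.one_apply_ne (by decide)
  have h11 : (1 : Matrix (Fin 2) (Fin 2) K) 1 1 = 1 := Matrix.one_apply_eq 1
  simp [phi, h00, h01, h10, h11, Polynomial.coeff_X_pow, Matrix.one_apply, Fin.ext_iff, eq_comm]

lemma phi_pow (n : ℕ) (A : Matrix (Fin 2) (Fin 2) K) (m : ℕ) :
    phi n (A ^ m) = phi n A ^ m := by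
  induction m with
  | zero => simpa using phi_one (K := K) n
  | succ m ih => rw [pow_succ, phi_mul, ih, ← pow_succ']

end Phi

section Fib

/-- The Fibonacci matrix over `ZMod p`. -/
def Qm (p : ℕ) : Matrix (Fin 2) (Fin 2) (ZMod p) := !![1, 1; 1, 0]

lemma Qm_pow (p m : ℕ) : Qm p ^ (m + 1) =
    !![(Nat.fib (m + 2) : ZMod p), (Nat.fib (m + 1) : ZMod p);
       (Nat.fib (m + 1) : ZMod p), (Nat.fib m : ZMod p)] := by
  induction m with
  | zero =>
    ext i j
    fin_cases i <;> fin_cases j <;> simp [Qm]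
  | succ m ih =>
    rw [pow_succ, ih]
    ext i j
    fin_cases i <;> fin_cases j <;>
      simp [Qm, Matrix.mul_apply, Fin.sum_univ_two, Nat.fib_add_two] <;> push_cast <;> ring

lemma Rmat_eq_phi (p n : ℕ) : RmatMod p n = (phi n (Qm p))ᵀ := by
  ext i j
  have hn : 0 < n := i.pos
  have hi : i.1 ≤ n - 1 := by have := i.2; omega
  have hj : j.1 ≤ n - 1 := by have := j.2; omega
  simp only [RmatMod, phi, Matrix.transpose_apply, Matrix.of_apply]
  have h00 : (Qm p) 0 0 = 1 := rfl
  have h01 : (Qm p) 0 1 = 1 := rfl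
  have h10 : (Qm p) 1 0 = 1 := rfl
  have h11 : (Qm p) 1 1 = 0 := rfl
  rw [h00, h01, h10, h11]
  simp only [Polynomial.C_1, Polynomial.C_0, one_mul, add_zero]
  rw [Polynomial.coeff_mul_X_pow', Polynomial.coeff_X_add_one_pow]
  by_cases hc : n - 1 - i.1 ≤ j.1
  · rw [if_pos hc]
    have hle : j.1 - (n - 1 - i.1) ≤ i.1 := by omega
    have : i.1.choose (n - 1 - j.1) = i.1.choose (j.1 - (n - 1 - i.1)) := by
      rw [← Nat.choose_symm hle]
      congr 1
      omega
    rw [this]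
  · rw [if_neg hc]
    have : i.1 < n - 1 - j.1 := by omega
    rw [Nat.choose_eq_zero_of_lt this, Nat.cast_zero]

end Fib

/-- If `e` is the Fibonacci entry point modulo the prime `p`, then `R_n ^ (4e) ≡ I (mod p)`. -/
theorem Rmat_pow_four_entry_point (p n e : ℕ) (hp : p.Prime)
    (he : 0 < e) (hdvd : p ∣ Nat.fib e)
    (hmin : ∀ m : ℕ, 0 < m → m < e → ¬ p ∣ Nat.fib m) :
    RmatMod p n ^ (4 * e) = 1 := by
  haveI : NeZero p := ⟨hp.ne_zero⟩
  obtain ⟨e', rfl⟩ : ∃ e', e = e' + 1 := ⟨e - 1, by omega⟩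
  have hfe : ((Nat.fib (e' + 1) : ZMod p)) = 0 :=
    (ZMod.natCast_eq_zero_iff _ _).mpr hdvd
  set a : ZMod p := (Nat.fib e' : ZMod p) with ha
  have ha2 : (Nat.fib (e' + 2) : ZMod p) = a := by
    rw [Nat.fib_add_two]
    push_cast
    rw [hfe, ha, add_zero]
  have hQe : Qm p ^ (e' + 1) = a • (1 : Matrix (Fin 2) (Fin 2) (ZMod p)) := by
    rw [Qm_pow, hfe, ha2]
    ext i j
    fin_cases i <;> fin_cases j <;> simp [Matrix.one_apply, ha]
  have hdet : a * a = (-1 : ZMod p) ^ (e' + 1) := by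
    have h1 : (Qm p ^ (e' + 1)).det = ((Qm p).det) ^ (e' + 1) := Matrix.det_pow _ _
    have h2 : (Qm p).det = -1 := by
      simp [Qm, Matrix.det_fin_two_of]
    have h3 : (Qm p ^ (e' + 1)).det = a * a := by
      rw [hQe]
      simp [Matrix.det_smul, Matrix.det_one]
      ring
    rw [h3, h2] at h1
    exact h1
  have ha4 : a ^ 4 = 1 := by
    have : a ^ 4 = (a * a) ^ 2 := by ring
    rw [this, hdet, ← pow_mul, mul_comm, pow_mul]
    norm_num
  have hQ4 : Qm p ^ (4 * (e' + 1)) = 1 := by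
    rw [mul_comm, pow_mul, hQe, _root_.smul_pow, one_pow, ha4, one_smul]
  rw [Rmat_eq_phi, ← Matrix.transpose_pow, ← phi_pow, hQ4, phi_one, Matrix.transpose_one]
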